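/- There is no well-formed finite trace satisfying G(F u₁ ∧ F u₂) for two distinct update terms u₁, u₂ on the same stream variable, where well-formedness requires that at the final position no update term holds, and at every earlier position each variable has exactly one update. (In particular, G(F [x←y] ∧ F [x←z]) is unsatisfiable over well-formed finite traces, witnessing that TSL_f is strictly less expressive than TSL.) -/
import Mathlib


/-- No well-formed finite trace satisfies G(F u₁ ∧ F u₂) for distinct update
terms u₁ ≠ u₂ on the same stream variable x.  Terms are modeled by a type
`Term` with `isUpdate : Term → Option V` tagging update terms by variable. -/
theorem stmt_1 {Term V : Type*} (isUpdate : Term → Option V)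
    (x : V) (u₁ u₂ : Term) (hne : u₁ ≠ u₂)
    (h₁ : isUpdate u₁ = some x) (h₂ : isUpdate u₂ = some x) :
    ¬ ∃ σ : List (Set Term), σ ≠ [] ∧
      -- well-formedness (1): at every non-final position, each variable has
      -- exactly one update term
      (∀ i, i < σ.length - 1 → ∀ v : V,
        ∃! t : Term, t ∈ σ.getD i ∅ ∧ isUpdate t = some v) ∧
      -- well-formedness (2): no update term holds at the final position
      (∀ t ∈ σ.getD (σ.length - 1) ∅, isUpdate t = none) ∧
      -- (σ, 0) ⊨ G (F u₁ ∧ F u₂)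
      (∀ i, i < σ.length →
        (∃ j, i ≤ j ∧ j < σ.length ∧ u₁ ∈ σ.getD j ∅) ∧
        (∃ j, i ≤ j ∧ j < σ.length ∧ u₂ ∈ σ.getD j ∅)) := by
  rintro ⟨σ, hσ, -, hfin, hG⟩
  have hlen : 0 < σ.length := List.length_pos_iff.mpr hσ
  obtain ⟨⟨j, hij, hjl, hj⟩, -⟩ := hG (σ.length - 1) (Nat.sub_lt hlen one_pos)
  have hje : j = σ.length - 1 := le_antisymm (Nat.le_sub_one_of_lt hjl) hij
  have := hfin u₁ (hje ▸ hj)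
  simp [h₁] at this
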